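/- Let m ≥ 2, k ∈ {1,…,m−1}, and let B ⊆ {1,…,2^m−1} be a set of ⌊(4/3)·2^k⌋ consecutive integers. Then every gap of the set ψ(B) ∪ {0,1} is at most 3/2^{k+1}, where ψ(n) = Σ_{i=1}^m ((e_{i−1} + e_i) mod 2)/2^i with e₀ := 0. -/

import Mathlib

/-- The `i`-th digit (1-based) of `n` in base `b`, with the convention that the
`0`-th digit is `0`. -/
def nthDigit (b n i : ℕ) : ℕ := if i = 0 then 0 else n / b ^ (i - 1) % b
/-- The map `ψ(n) = Σ_{i=1}^m ((e_{i-1} + e_i) mod 2)/2^i` with the convention `e₀ = 0`. -/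
noncomputable def psiMap (m n : ℕ) : ℝ :=
  ∑ i ∈ Finset.Icc 1 m,
    (((nthDigit 2 n (i - 1) + nthDigit 2 n i) % 2 : ℕ) : ℝ) / (2 : ℝ) ^ i

namespace PsiGap

/-- binary popcount -/
def pc : ℕ → ℕ
  | 0 => 0
  | (n+1) => (n+1) % 2 + pc ((n+1)/2)
decreasing_by exact Nat.div_lt_self (Nat.succ_pos n) one_lt_two

lemma pc_eq (n : ℕ) : pc n = n % 2 + pc (n / 2) := by
  cases n with
  | zero => simp [pc]
  | succ n => rw [pc]

lemma pc_two_mul (x : ℕ) : pc (2 * x) = pc x := by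
  rw [pc_eq]
  have h1 : 2 * x % 2 = 0 := by omega
  have h2 : 2 * x / 2 = x := by omega
  rw [h1, h2]; omega

lemma pc_two_mul_add_one (x : ℕ) : pc (2 * x + 1) = pc x + 1 := by
  rw [pc_eq]
  have h1 : (2 * x + 1) % 2 = 1 := by omega
  have h2 : (2 * x + 1) / 2 = x := by omega
  rw [h1, h2]; omega

lemma pc_pow_mul (u o : ℕ) : pc (2 ^ u * o) = pc o := by
  induction u with
  | zero => simp
  | succ u ih =>
    have : 2 ^ (u+1) * o = 2 * (2 ^ u * o) := by ring
    rw [this, pc_two_mul, ih]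

lemma pc_pow_mul_sub_one (u o : ℕ) (ho : 1 ≤ o) :
    pc (2 ^ u * o - 1) = u + pc (o - 1) := by
  induction u with
  | zero => simp
  | succ u ih =>
    have h1 : (1:ℕ) ≤ 2 ^ u * o := Nat.one_le_iff_ne_zero.2 (by positivity)
    have h2 : 2 ^ (u+1) * o - 1 = 2 * (2 ^ u * o - 1) + 1 := by
      have : 2 ^ (u+1) * o = 2 * (2 ^ u * o) := by ring
      omega
    rw [h2, pc_two_mul_add_one, ih]; omega

lemma pc_odd (o : ℕ) (ho : o % 2 = 1) : pc o = pc (o - 1) + 1 := by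
  obtain ⟨x, rfl⟩ : ∃ x, o = 2 * x + 1 := ⟨o / 2, by omega⟩
  rw [pc_two_mul_add_one]
  have : 2 * x + 1 - 1 = 2 * x := by omega
  rw [this, pc_two_mul]

lemma pc_zero : pc 0 = 0 := by rw [pc]
lemma pc_le_one_of_le_one (x : ℕ) (h : x ≤ 1) : pc x = x := by
  interval_cases x
  · rw [pc]
  · rw [pc_eq]; simp [pc_zero]

lemma two_pow_mod_three (k : ℕ) : 2 ^ k % 3 = 1 ∨ 2 ^ k % 3 = 2 := by
  induction k with
  | zero => left; rfl
  | succ k ih =>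
    have : 2 ^ (k+1) = 2 * 2 ^ k := by ring
    omega

lemma sum_two_pow (T : ℕ) : ∑ t ∈ Finset.range T, 2 ^ t + 1 = 2 ^ T := by
  induction T with
  | zero => simp
  | succ T ih => rw [Finset.sum_range_succ]; omega

lemma SB1 (f : ℕ → ℕ) (hf : ∀ i, f i ≤ 1) (T : ℕ) :
    ∑ t ∈ Finset.range T, f t * 2 ^ t < 2 ^ T := by
  have h := sum_two_pow T
  have : ∑ t ∈ Finset.range T, f t * 2 ^ t ≤ ∑ t ∈ Finset.range T, 2 ^ t := by
    apply Finset.sum_le_sum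
    intro i _
    calc f i * 2 ^ i ≤ 1 * 2 ^ i := Nat.mul_le_mul_right _ (hf i)
      _ = 2 ^ i := one_mul _
  omega

lemma SB2 (f : ℕ → ℕ) (hf : ∀ i, f i ≤ 1) (T u : ℕ) (hu : u < T) :
    (∑ t ∈ Finset.range T, f t * 2 ^ t) / 2 ^ u % 2 = f u := by
  have hsplit : Finset.range T = Finset.Ico 0 u ∪ Finset.Ico u T := by
    rw [Finset.range_eq_Ico, ← Finset.Ico_union_Ico_eq_Ico (Nat.zero_le u) (le_of_lt hu)]
  have hd : Disjoint (Finset.Ico 0 u) (Finset.Ico u T) := by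
    apply Finset.Ico_disjoint_Ico_consecutive
  rw [hsplit, Finset.sum_union hd]
  have h1 : ∑ t ∈ Finset.Ico u T, f t * 2 ^ t
      = f u * 2 ^ u + ∑ t ∈ Finset.Ico (u+1) T, f t * 2 ^ t := by
    rw [Finset.sum_eq_sum_Ico_succ_bot hu]
  have h2 : ∑ t ∈ Finset.Ico (u+1) T, f t * 2 ^ t
      = 2 ^ u * (2 * ∑ t ∈ Finset.Ico (u+1) T, f t * 2 ^ (t - u - 1)) := by
    rw [Finset.mul_sum, Finset.mul_sum]
    apply Finset.sum_congr rfl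
    intro t ht
    rw [Finset.mem_Ico] at ht
    have : 2 ^ t = 2 ^ u * (2 * 2 ^ (t - u - 1)) := by
      rw [← pow_succ']
      rw [← pow_add]
      congr 1
      omega
    rw [this]; ring
  have hA : ∑ t ∈ Finset.Ico 0 u, f t * 2 ^ t < 2 ^ u := by
    have := SB1 f hf u
    rw [Finset.range_eq_Ico] at this
    exact this
  set A := ∑ t ∈ Finset.Ico 0 u, f t * 2 ^ t
  set C := ∑ t ∈ Finset.Ico (u+1) T, f t * 2 ^ (t - u - 1)
  rw [h1, h2]
  have : A + (f u * 2 ^ u + 2 ^ u * (2 * C)) = A + 2 ^ u * (f u + 2 * C) := by ring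
  rw [this, Nat.add_mul_div_left _ _ (by positivity), Nat.div_eq_of_lt hA]
  have := hf u
  omega

lemma bitsum (T x : ℕ) : ∑ t ∈ Finset.range T, (x / 2 ^ t % 2) * 2 ^ t = x % 2 ^ T := by
  induction T with
  | zero => simp [Nat.mod_one]
  | succ T ih =>
    rw [Finset.sum_range_succ, ih]
    have h := Nat.mod_mul (a := 2 ^ T) (b := 2) (x := x)
    have h2 : x % 2 ^ (T+1) = x % 2 ^ T + 2 ^ T * (x / 2 ^ T % 2) := by
      rw [pow_succ]; exact h
    rw [h2]; ring

def g (k i j : ℕ) : ℕ := pc (j / 2 ^ (k + 1 - i)) % 2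

def rr (k j : ℕ) : ℕ := ∑ i ∈ Finset.Icc 1 (k+1), g k i j * 2 ^ (i - 1)

def dsum (k ρ : ℕ) : ℕ :=
  ∑ i ∈ Finset.Icc 1 (k+1), ((nthDigit 2 ρ (i-1) + nthDigit 2 ρ i) % 2) * 2 ^ (k+1-i)

lemma g_le_one (k i j : ℕ) : g k i j ≤ 1 := by
  have : pc (j / 2 ^ (k + 1 - i)) % 2 < 2 := Nat.mod_lt _ (by norm_num)
  unfold g; omega

lemma nthDigit_pos (b n i : ℕ) (hi : 1 ≤ i) : nthDigit b n i = n / b ^ (i - 1) % b := by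
  unfold nthDigit; rw [if_neg (by omega)]

lemma rr_range_sum (k j : ℕ) :
    rr k j = ∑ t ∈ Finset.range (k+1), g k (t+1) j * 2 ^ t := by
  unfold rr
  have h : Finset.Icc 1 (k+1) = Finset.Ico 1 (k+2) := by
    ext i; simp [Finset.mem_Icc, Finset.mem_Ico]; omega
  rw [h, Finset.sum_Ico_eq_sum_range]
  apply Finset.sum_congr (by congr 1)
  intro t _
  have h1 : 1 + t = t + 1 := by omega
  rw [h1]; norm_num

lemma rr_lt (k j : ℕ) : rr k j < 2 ^ (k+1) := by
  rw [rr_range_sum]; exact SB1 _ (fun t => g_le_one k (t+1) j) (k+1)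

lemma rr_digit (k j i : ℕ) (hi : 1 ≤ i) (hik : i ≤ k+1) :
    rr k j / 2 ^ (i-1) % 2 = g k i j := by
  obtain ⟨i', rfl⟩ : ∃ i', i = i' + 1 := ⟨i-1, by omega⟩
  rw [rr_range_sum]
  have h2 := SB2 (fun t => g k (t+1) j) (fun t => g_le_one k (t+1) j) (k+1) i' (by omega)
  simpa using h2

lemma nthDigit_rr (k j i : ℕ) (hi : 1 ≤ i) (hik : i ≤ k+1) :
    nthDigit 2 (rr k j) i = g k i j := by
  rw [nthDigit_pos _ _ _ hi]; exact rr_digit k j i hi hik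

lemma rr_top (k j : ℕ) : rr k j / 2 ^ k = g k (k+1) j := by
  have h1 : rr k j / 2 ^ k % 2 = g k (k+1) j := by
    have := rr_digit k j (k+1) (by omega) (le_refl _)
    simpa using this
  have h2 : rr k j / 2 ^ k < 2 := by
    apply (Nat.div_lt_iff_lt_mul (by positivity)).mpr
    have := rr_lt k j
    rw [pow_succ] at this; omega
  have h3 := g_le_one k (k+1) j
  revert h1 h2 h3
  generalize rr k j / 2 ^ k = X
  intro h1 h2 h3
  omega

lemma rr_low (k j : ℕ) : rr k j % 2 ^ k = ∑ i ∈ Finset.Icc 1 k, g k i j * 2 ^ (i - 1) := by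
  have hsplit : rr k j = (∑ i ∈ Finset.Icc 1 k, g k i j * 2 ^ (i - 1)) + g k (k+1) j * 2 ^ k := by
    unfold rr
    rw [Finset.sum_Icc_succ_top (by omega)]
    congr 2
  have hX : (∑ i ∈ Finset.Icc 1 k, g k i j * 2 ^ (i - 1)) < 2 ^ k := by
    have h : Finset.Icc 1 k = Finset.Ico 1 (k+1) := by
      ext i; simp [Finset.mem_Icc, Finset.mem_Ico]
    rw [h, Finset.sum_Ico_eq_sum_range]
    have e : k + 1 - 1 = k := by omega
    rw [e]
    have : ∀ t ∈ Finset.range k, g k (1+t) j * 2 ^ (1+t-1) = g k (t+1) j * 2 ^ t := by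
      intro t _; congr 1; · congr 1; omega
      · congr 1; omega
    rw [Finset.sum_congr rfl this]
    exact SB1 _ (fun t => g_le_one k (t+1) j) k
  rw [hsplit]
  have hg := g_le_one k (k+1) j
  interval_cases h : g k (k+1) j
  · simpa using Nat.mod_eq_of_lt hX
  · rw [one_mul, Nat.add_mod_right]; exact Nat.mod_eq_of_lt hX

lemma dsum_rr (k j : ℕ) (hj : j < 2 ^ (k+1)) : dsum k (rr k j) = j := by
  unfold dsum
  have hterm : ∀ i ∈ Finset.Icc 1 (k+1),
      ((nthDigit 2 (rr k j) (i-1) + nthDigit 2 (rr k j) i) % 2) * 2 ^ (k+1-i)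
      = (j / 2 ^ (k+1-i) % 2) * 2 ^ (k+1-i) := by
    intro i hi
    rw [Finset.mem_Icc] at hi
    congr 1
    by_cases hi1 : i = 1
    · subst hi1
      have e0 : (1:ℕ) - 1 = 0 := rfl
      rw [e0]
      have hd0 : nthDigit 2 (rr k j) 0 = 0 := rfl
      rw [hd0, nthDigit_rr k j 1 (by omega) (by omega)]
      have hv : j / 2 ^ (k + 1 - 1) = j / 2 ^ k := by norm_num
      have hle : j / 2 ^ k ≤ 1 := by
        have : j / 2 ^ k < 2 := by
          apply (Nat.div_lt_iff_lt_mul (by positivity)).mpr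
          rw [pow_succ] at hj; omega
        omega
      unfold g
      rw [hv, pc_le_one_of_le_one _ hle]
      omega
    · have hi2 : 2 ≤ i := by omega
      rw [nthDigit_rr k j (i-1) (by omega) (by omega), nthDigit_rr k j i (by omega) (by omega)]
      unfold g
      have e1 : k + 1 - (i-1) = (k + 1 - i) + 1 := by omega
      have e2 : j / 2 ^ ((k+1-i)+1) = (j / 2 ^ (k+1-i)) / 2 := by
        rw [pow_succ, ← Nat.div_div_eq_div_mul]
      rw [e1, e2]
      have hp := pc_eq (j / 2 ^ (k+1-i))
      omega
  rw [Finset.sum_congr rfl hterm]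
  have h : Finset.Icc 1 (k+1) = Finset.Ico 1 (k+2) := by
    ext i; simp [Finset.mem_Icc, Finset.mem_Ico]; omega
  rw [h, Finset.sum_Ico_eq_sum_range]
  have e : k + 2 - 1 = k + 1 := by omega
  rw [e]
  have hre : ∀ t ∈ Finset.range (k+1),
      (j / 2 ^ (k+1-(1+t)) % 2) * 2 ^ (k+1-(1+t)) = (j / 2 ^ (k+1-1-t) % 2) * 2 ^ (k+1-1-t) := by
    intro t _
    have h' : k+1-(1+t) = k + 1 - 1 - t := by omega
    rw [h']
  rw [Finset.sum_congr rfl hre]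
  rw [Finset.sum_range_reflect (fun t => (j / 2 ^ t % 2) * 2 ^ t) (k+1)]
  rw [bitsum, Nat.mod_eq_of_lt hj]

lemma odd_div_pow (o u : ℕ) (ho : o % 2 = 1) : o / 2 ^ (u+1) = (o - 1) / 2 ^ (u+1) := by
  obtain ⟨x, rfl⟩ : ∃ x, o = 2 * x + 1 := ⟨o / 2, by omega⟩
  have h1 : (2 * x + 1) / 2 ^ (u+1) = x / 2 ^ u := by
    rw [pow_succ', ← Nat.div_div_eq_div_mul]
    congr 1; omega
  have h2 : (2 * x + 1 - 1) / 2 ^ (u+1) = x / 2 ^ u := by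
    have : 2 * x + 1 - 1 = 2 * x := by omega
    rw [this, pow_succ', ← Nat.div_div_eq_div_mul]
    congr 1; omega
  rw [h1, h2]

lemma floors_eq (J s o t : ℕ) (ho : o % 2 = 1) (hJ : J + 1 = 2 ^ s * o) (ht : s < t) :
    (J + 1) / 2 ^ t = J / 2 ^ t := by
  obtain ⟨u, rfl⟩ : ∃ u, t = s + (u + 1) := ⟨t - s - 1, by omega⟩
  have hsplit : (2:ℕ) ^ (s + (u+1)) = 2 ^ s * 2 ^ (u+1) := by rw [pow_add]
  have ho1 : 1 ≤ o := by omega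
  have h1 : (J + 1) / 2 ^ (s + (u+1)) = o / 2 ^ (u+1) := by
    rw [hJ, hsplit, ← Nat.div_div_eq_div_mul, Nat.mul_div_cancel_left _ (by positivity)]
  have hJ' : J = 2 ^ s * (o - 1) + (2 ^ s - 1) := by
    have hp : (1:ℕ) ≤ 2 ^ s := Nat.one_le_two_pow
    have h' : 2 ^ s * o = 2 ^ s * (o - 1) + 2 ^ s := by
      conv_lhs => rw [show o = (o - 1) + 1 by omega]
      rw [Nat.mul_add, mul_one]
    omega
  have h2 : J / 2 ^ (s + (u+1)) = (o - 1) / 2 ^ (u+1) := by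
    rw [hsplit, ← Nat.div_div_eq_div_mul]
    congr 1
    rw [hJ', Nat.add_comm, Nat.add_mul_div_left _ _ (by positivity : (0:ℕ) < 2 ^ s)]
    rw [Nat.div_eq_of_lt (by have : (1:ℕ) ≤ 2 ^ s := Nat.one_le_two_pow; omega)]
    omega
  rw [h1, h2, odd_div_pow o u ho]

lemma vals_le (J s o t : ℕ) (ho : o % 2 = 1) (hJ : J + 1 = 2 ^ s * o) (ht : t ≤ s) :
    (J + 1) / 2 ^ t = 2 ^ (s - t) * o ∧ J / 2 ^ t = 2 ^ (s - t) * o - 1 := by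
  have ho1 : 1 ≤ o := by omega
  have hs : (2:ℕ) ^ s = 2 ^ t * 2 ^ (s - t) := by rw [← pow_add]; congr 1; omega
  have hge : (1:ℕ) ≤ 2 ^ (s - t) * o := Nat.mul_pos (by positivity) (by omega)
  constructor
  · rw [hJ, hs, mul_assoc, Nat.mul_div_cancel_left _ (by positivity : (0:ℕ) < 2 ^ t)]
  · have hJ' : J = 2 ^ t * (2 ^ (s - t) * o - 1) + (2 ^ t - 1) := by
      have h1 : 2 ^ s * o = 2 ^ t * (2 ^ (s-t) * o) := by rw [hs, mul_assoc]
      have hp : (1:ℕ) ≤ 2 ^ t := Nat.one_le_two_pow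
      have h2 : 2 ^ t * (2 ^ (s-t) * o) = 2 ^ t * (2 ^ (s-t) * o - 1) + 2 ^ t := by
        conv_lhs => rw [show 2 ^ (s-t) * o = (2 ^ (s-t) * o - 1) + 1 by omega]
        rw [Nat.mul_add, mul_one]
      omega
    rw [hJ', Nat.add_comm, Nat.add_mul_div_left _ _ (by positivity : (0:ℕ) < 2 ^ t)]
    rw [Nat.div_eq_of_lt (by have : (1:ℕ) ≤ 2 ^ t := Nat.one_le_two_pow; omega)]
    omega

lemma g_eq_of (k i J s o : ℕ) (ho : o % 2 = 1) (hJ : J + 1 = 2 ^ s * o)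
    (h : s < k + 1 - i ∨ ((k + 1 - i) ≤ s ∧ (s + (k + 1 - i)) % 2 = 1)) :
    g k i (J + 1) = g k i J := by
  set t := k + 1 - i with hti
  rcases h with h | ⟨h1, h2⟩
  · unfold g; rw [floors_eq J s o t ho hJ h]
  · obtain ⟨hv1, hv2⟩ := vals_le J s o t ho hJ h1
    have ho1 : 1 ≤ o := by omega
    unfold g
    rw [hv1, hv2, pc_pow_mul, pc_pow_mul_sub_one _ _ ho1, pc_odd o ho]
    omega

lemma g_ne_of (k i J s o : ℕ) (ho : o % 2 = 1) (hJ : J + 1 = 2 ^ s * o)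
    (h1 : (k + 1 - i) ≤ s) (h2 : (s + (k + 1 - i)) % 2 = 0) :
    g k i (J + 1) ≠ g k i J := by
  set t := k + 1 - i with hti
  obtain ⟨hv1, hv2⟩ := vals_le J s o t ho hJ h1
  have ho1 : 1 ≤ o := by omega
  unfold g
  rw [hv1, hv2, pc_pow_mul, pc_pow_mul_sub_one _ _ ho1, pc_odd o ho]
  omega

lemma E_val (k : ℕ) :
    3 * (∑ i ∈ (Finset.Icc 1 k).filter (fun i => i % 2 ≠ k % 2), 2 ^ (i - 1)) + 2 ^ k % 3
      = 2 ^ k := by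
  induction k using Nat.strong_induction_on with
  | _ k ih =>
    match k with
    | 0 => decide
    | 1 => decide
    | (k+2) =>
      have hset : (Finset.Icc 1 (k+2)).filter (fun i => i % 2 ≠ (k+2) % 2)
          = insert (k+1) ((Finset.Icc 1 k).filter (fun i => i % 2 ≠ k % 2)) := by
        ext i
        simp only [Finset.mem_filter, Finset.mem_Icc, Finset.mem_insert]
        omega
      have hnotmem : (k+1) ∉ (Finset.Icc 1 k).filter (fun i => i % 2 ≠ k % 2) := by
        simp only [Finset.mem_filter, Finset.mem_Icc]
        omega
      rw [hset, Finset.sum_insert hnotmem]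
      have hk := ih k (by omega)
      have e1 : (2:ℕ) ^ (k+1-1) = 2 ^ k := by norm_num
      have e2 : (2:ℕ) ^ (k+2) = 4 * 2 ^ k := by ring
      rw [e1, e2]
      omega

noncomputable def tailR (m k n : ℕ) : ℝ :=
  ∑ i ∈ Finset.Icc (k+2) m, (((nthDigit 2 n (i-1) + nthDigit 2 n i) % 2 : ℕ) : ℝ) / (2:ℝ) ^ i

lemma geo_sum (u v : ℕ) (h : u ≤ v) :
    ∑ i ∈ Finset.Icc (u+1) v, (1:ℝ)/2^i = 1/2^u - 1/2^v := by
  induction v, h using Nat.le_induction with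
  | base =>
    have : Finset.Icc (u+1) u = ∅ := by rw [Finset.Icc_eq_empty]; omega
    simp [this]
  | succ v hv ih =>
    rw [Finset.sum_Icc_succ_top (by omega), ih]
    have h2 : (2:ℝ)^v ≠ 0 := by positivity
    field_simp
    ring

lemma dterm_nonneg (n i : ℕ) :
    0 ≤ (((nthDigit 2 n (i-1) + nthDigit 2 n i) % 2 : ℕ) : ℝ) / (2:ℝ) ^ i := by positivity

lemma dterm_le (n i : ℕ) :
    (((nthDigit 2 n (i-1) + nthDigit 2 n i) % 2 : ℕ) : ℝ) / (2:ℝ) ^ i ≤ 1 / 2 ^ i := by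
  apply div_le_div_of_nonneg_right ?_ (by positivity)
  have h : (nthDigit 2 n (i-1) + nthDigit 2 n i) % 2 ≤ 1 := by omega
  exact_mod_cast h

lemma psi_nonneg (m n : ℕ) : 0 ≤ psiMap m n :=
  Finset.sum_nonneg (fun i _ => dterm_nonneg n i)

lemma psi_le_one (m n : ℕ) : psiMap m n ≤ 1 := by
  unfold psiMap
  have h1 : ∑ i ∈ Finset.Icc 1 m, (((nthDigit 2 n (i-1) + nthDigit 2 n i) % 2 : ℕ) : ℝ) / (2:ℝ) ^ i
      ≤ ∑ i ∈ Finset.Icc 1 m, (1:ℝ)/2^i :=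
    Finset.sum_le_sum (fun i _ => dterm_le n i)
  have h2 : ∑ i ∈ Finset.Icc 1 m, (1:ℝ)/2^i = 1/2^0 - 1/2^m := by
    have := geo_sum 0 m (Nat.zero_le m)
    simpa using this
  have h3 : (0:ℝ) < ((2:ℝ)^m)⁻¹ := by positivity
  rw [h2] at h1
  norm_num at h1 ⊢
  linarith

lemma tail_nonneg (m k n : ℕ) : 0 ≤ tailR m k n :=
  Finset.sum_nonneg (fun i _ => dterm_nonneg n i)

lemma tail_lt (m k n : ℕ) (hkm : k + 1 ≤ m) : tailR m k n < 1 / 2 ^ (k+1) := by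
  unfold tailR
  have h1 : ∑ i ∈ Finset.Icc (k+2) m, (((nthDigit 2 n (i-1) + nthDigit 2 n i) % 2 : ℕ) : ℝ) / (2:ℝ) ^ i
      ≤ ∑ i ∈ Finset.Icc (k+2) m, (1:ℝ)/2^i :=
    Finset.sum_le_sum (fun i _ => dterm_le n i)
  have h2 := geo_sum (k+1) m hkm
  have h3 : (0:ℝ) < 1/2^m := by positivity
  rw [h2] at h1
  linarith

lemma nthDigit_mod (k n i : ℕ) (hi : 1 ≤ i) (hik : i ≤ k+1) :
    nthDigit 2 (n % 2 ^ (k+1)) i = nthDigit 2 n i := by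
  unfold nthDigit
  rw [if_neg (by omega), if_neg (by omega)]
  have hsplit : (2:ℕ) ^ (k+1) = 2 ^ (i-1) * 2 ^ (k+2-i) := by
    rw [← pow_add]; congr 1; omega
  rw [hsplit, Nat.mod_mul_right_div_self]
  apply Nat.mod_mod_of_dvd
  exact ⟨2 ^ (k+1-i), by rw [← pow_succ']; congr 1; omega⟩

lemma nthDigit_high (k n i : ℕ) (hi : k + 1 ≤ i) :
    nthDigit 2 n i = n / 2 ^ k / 2 ^ (i-1-k) % 2 := by
  unfold nthDigit
  rw [if_neg (by omega), Nat.div_div_eq_div_mul, ← pow_add]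
  congr 3
  omega

lemma psi_decomp (m k n : ℕ) (hkm : k + 1 ≤ m) :
    psiMap m n = (dsum k (n % 2 ^ (k+1)) : ℝ) / 2 ^ (k+1) + tailR m k n := by
  unfold psiMap tailR
  have hsplit := Finset.sum_Ioc_consecutive
    (fun i => (((nthDigit 2 n (i-1) + nthDigit 2 n i) % 2 : ℕ) : ℝ) / (2:ℝ) ^ i)
    (Nat.zero_le (k+1)) hkm
  have e1 : Finset.Icc 1 m = Finset.Ioc 0 m := by rw [← Finset.Icc_add_one_left_eq_Ioc]; rfl
  have e2 : Finset.Icc (k+2) m = Finset.Ioc (k+1) m := by rw [← Finset.Icc_add_one_left_eq_Ioc]; rfl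
  have e3 : Finset.Icc 1 (k+1) = Finset.Ioc 0 (k+1) := by rw [← Finset.Icc_add_one_left_eq_Ioc]; rfl
  rw [e1, e2, ← hsplit]
  congr 1
  rw [← e3]
  unfold dsum
  push_cast
  rw [Finset.sum_div]
  apply Finset.sum_congr rfl
  intro i hi
  rw [Finset.mem_Icc] at hi
  have hd1 : nthDigit 2 (n % 2 ^ (k+1)) i = nthDigit 2 n i := nthDigit_mod k n i hi.1 hi.2
  have hd0 : nthDigit 2 (n % 2 ^ (k+1)) (i-1) = nthDigit 2 n (i-1) := by
    by_cases h1 : i = 1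
    · subst h1; rfl
    · exact nthDigit_mod k n (i-1) (by omega) (by omega)
  rw [hd1, hd0]
  have hpow : (2:ℝ) ^ (k+1) = 2 ^ (k+1-i) * 2 ^ i := by
    rw [← pow_add]; congr 1; omega
  rw [hpow]
  set d := ((nthDigit 2 n (i-1) + nthDigit 2 n i) % 2 : ℕ)
  have hA : ((2:ℝ) ^ (k+1-i)) ≠ 0 := by positivity
  rw [mul_comm ((d:ℝ)) _, mul_div_mul_left _ _ hA]

lemma tail_congr (m k n n' : ℕ) (h : n / 2 ^ k = n' / 2 ^ k) :
    tailR m k n = tailR m k n' := by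
  unfold tailR
  apply Finset.sum_congr rfl
  intro i hi
  rw [Finset.mem_Icc] at hi
  rw [nthDigit_high k n i (by omega), nthDigit_high k n (i-1) (by omega),
      nthDigit_high k n' i (by omega), nthDigit_high k n' (i-1) (by omega), h]

lemma div_close (K u v : ℕ) (hK : 0 < K) (hpar : u / K % 2 = v / K % 2)
    (hle : v ≤ u) (hlt : u - v < K) : u / K = v / K := by
  have h1 : v / K ≤ u / K := Nat.div_le_div_right hle
  have h2 : u / K < v / K + 2 := by
    rw [Nat.div_lt_iff_lt_mul hK]
    have hv : v / K * K + v % K = v := Nat.div_add_mod' v K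
    have hvm : v % K < K := Nat.mod_lt _ hK
    have hd : v / K * K ≤ v := Nat.div_mul_le_self v K
    have : (v / K + 2) * K = v / K * K + 2 * K := by ring
    omega
  omega

lemma rr_step (k j1 j2 : ℕ) (hlow : ∀ i, 1 ≤ i → i ≤ k → g k i j2 = g k i j1)
    (htop : g k (k+1) j2 ≠ g k (k+1) j1) :
    rr k j2 = rr k j1 + 2 ^ k ∨ rr k j1 = rr k j2 + 2 ^ k := by
  have hl : rr k j2 % 2 ^ k = rr k j1 % 2 ^ k := by
    rw [rr_low, rr_low]
    apply Finset.sum_congr rfl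
    intro i hi
    rw [Finset.mem_Icc] at hi
    rw [hlow i hi.1 hi.2]
  have e2 : rr k j2 = 2 ^ k * g k (k+1) j2 + rr k j2 % 2 ^ k := by
    rw [← rr_top]; exact (Nat.div_add_mod _ _).symm
  have e1 : rr k j1 = 2 ^ k * g k (k+1) j1 + rr k j1 % 2 ^ k := by
    rw [← rr_top]; exact (Nat.div_add_mod _ _).symm
  have hb2 := g_le_one k (k+1) j2
  have hb1 := g_le_one k (k+1) j1
  rcases (by omega : g k (k+1) j2 = 0 ∨ g k (k+1) j2 = 1) with h2 | h2 <;>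
  rcases (by omega : g k (k+1) j1 = 0 ∨ g k (k+1) j1 = 1) with h1 | h1 <;>
    rw [h1] at e1 htop <;> rw [h2] at e2 htop
  · exact absurd rfl htop
  · right; rw [mul_zero] at e2; rw [mul_one] at e1; omega
  · left; rw [mul_zero] at e1; rw [mul_one] at e2; omega
  · exact absurd rfl htop

set_option maxHeartbeats 1000000 in
lemma main (m k a : ℕ) (hk1 : 1 ≤ k) (hkm : k + 1 ≤ m) (x : ℝ)
    (hx0 : 0 ≤ x) (hx1 : x + 3 / (2:ℝ) ^ (k+1) ≤ 1) :
    ∃ n : ℕ, (a ≤ n ∧ n < a + 2 ^ (k+2) / 3) ∧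
      x ≤ psiMap m n ∧ psiMap m n ≤ x + 3 / (2:ℝ) ^ (k+1) := by
  have hKpos : (0:ℕ) < 2 ^ k := by positivity
  set M := 2 ^ (k+1) with hMdef
  set K := 2 ^ k with hKdef
  set N := 2 ^ (k+2) / 3 with hNdef
  have hM2K : M = 2 * K := by rw [hMdef, hKdef, pow_succ]; ring
  have h4K : (2:ℕ) ^ (k+2) = 4 * K := by rw [hKdef]; ring
  have hK2 : 2 ≤ K := by
    rw [hKdef]
    calc (2:ℕ) = 2 ^ 1 := rfl
      _ ≤ 2 ^ k := Nat.pow_le_pow_right (by norm_num) hk1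
  have hKN : K ≤ N := by
    rw [hNdef, Nat.le_div_iff_mul_le (by norm_num)]; omega
  have hNM : N < M := by
    rw [hNdef, Nat.div_lt_iff_lt_mul (by norm_num)]; omega
  have hNc : 3 * N + K % 3 = 4 * K := by
    have hdm := Nat.div_add_mod (2 ^ (k+2)) 3
    rw [← hNdef] at hdm
    omega
  have hMpos : 0 < M := by omega
  have hMR : (0:ℝ) < (M:ℝ) := by exact_mod_cast hMpos
  have hcastM : ((M:ℕ):ℝ) = (2:ℝ) ^ (k+1) := by rw [hMdef]; push_cast; ring
  -- the index j
  set j := ⌈x * (M:ℝ)⌉₊ with hjdef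
  have hj1 : x * M ≤ (j:ℝ) := Nat.le_ceil _
  have hj2 : (j:ℝ) < x * M + 1 := Nat.ceil_lt_add_one (by positivity)
  have hjM : j + 3 ≤ M := by
    have hxM : x * M + 3 ≤ M := by
      have h := mul_le_mul_of_nonneg_right hx1 (le_of_lt hMR)
      have he : (x + 3 / (2:ℝ)^(k+1)) * M = x * M + 3 := by
        rw [← hcastM]; field_simp
      rw [he, one_mul] at h
      exact h
    have hjle : j ≤ M - 3 := by
      rw [hjdef, Nat.ceil_le]
      have hc3 : ((M - 3 : ℕ):ℝ) = (M:ℝ) - 3 := by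
        have h3M : 3 ≤ M := by omega
        push_cast [h3M]
        ring
      rw [hc3]; linarith
    omega
  -- position function
  set posf : ℕ → ℕ := fun ρ => (ρ + (M - a % M)) % M with hposdef
  have hpos_lt : ∀ ρ, posf ρ < M := fun ρ => Nat.mod_lt _ hMpos
  have hpos_mod : ∀ ρ, ρ < M → (a + posf ρ) % M = ρ := by
    intro ρ hρ
    have hq : M * (a / M) + a % M = a := Nat.div_add_mod a M
    have hlt : a % M < M := Nat.mod_lt _ hMpos
    have h1 : (a + posf ρ) % M = (a + (ρ + (M - a % M))) % M := by
      simp only [hposdef]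
      rw [Nat.add_mod_mod]
    have h2 : a + (ρ + (M - a % M)) = ρ + M * (a / M + 1) := by
      have : M * (a / M + 1) = M * (a / M) + M := by ring
      omega
    rw [h1, h2, Nat.add_mul_mod_self_left, Nat.mod_eq_of_lt hρ]
  -- generic step relation on positions
  have hstep : ∀ ρ1 ρ2, (ρ2 = ρ1 + K ∨ ρ1 = ρ2 + K) → posf ρ2 = (posf ρ1 + K) % M := by
    intro ρ1 ρ2 h
    rcases h with h | h
    · subst h
      simp only [hposdef]
      rw [Nat.mod_add_mod]
      congr 1
      omega
    · subst h
      simp only [hposdef]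
      rw [Nat.mod_add_mod]
      have e : ρ2 + K + (M - a % M) + K = (ρ2 + (M - a % M)) + M := by
        have hlt : a % M < M := Nat.mod_lt _ hMpos
        omega
      rw [e, Nat.add_mod_right]
  -- mod subtraction for positions beyond N
  have hstep' : ∀ ρ1 ρ2, (ρ2 = ρ1 + K ∨ ρ1 = ρ2 + K) → N ≤ posf ρ1 →
      posf ρ2 = posf ρ1 + K - M := by
    intro ρ1 ρ2 h hN
    rw [hstep ρ1 ρ2 h]
    have h1 : posf ρ1 < M := hpos_lt ρ1
    have h2 : M ≤ posf ρ1 + K := by omega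
    rw [Nat.mod_eq_sub_mod h2, Nat.mod_eq_of_lt (by omega)]
  -- the "hit" construction
  have hit : ∀ j' : ℕ, j' < M → posf (rr k j') < N →
      x ≤ (j':ℝ) / M → ((j':ℝ) + 1) / M ≤ x + 3 / (2:ℝ)^(k+1) →
      ∃ n : ℕ, (a ≤ n ∧ n < a + N) ∧
        x ≤ psiMap m n ∧ psiMap m n ≤ x + 3 / (2:ℝ)^(k+1) := by
    intro j' hj'M hposN hxle hple
    set n := a + posf (rr k j') with hndef
    have hmod : n % M = rr k j' := hpos_mod _ (rr_lt k j')
    have hψ := psi_decomp m k n hkm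
    rw [← hMdef] at hψ
    rw [hmod, dsum_rr k j' (by rw [← hMdef] at *; omega)] at hψ
    have hT0 := tail_nonneg m k n
    have hT1 := tail_lt m k n hkm
    refine ⟨n, ⟨by omega, by omega⟩, ?_, ?_⟩
    · rw [hψ, hcastM] at *
      calc x ≤ (j':ℝ) / (2:ℝ)^(k+1) := by rwa [hcastM] at hxle
        _ ≤ (j':ℝ) / (2:ℝ)^(k+1) + tailR m k n := by linarith
    · rw [hψ]
      have : ((j':ℝ)) / (2:ℝ)^(k+1) + tailR m k n < ((j':ℝ) + 1) / (2:ℝ)^(k+1) := by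
        rw [add_div]
        linarith [tail_lt m k n hkm]
      rw [hcastM] at hple
      linarith
  -- basic j-bounds in ℝ
  have hxj : x ≤ (j:ℝ) / M := by
    rw [le_div_iff₀ hMR]; exact hj1
  have hxj1 : x ≤ ((j:ℝ) + 1) / M := by
    have : (j:ℝ) / M ≤ ((j:ℝ)+1) / M := by gcongr <;> linarith
    linarith
  have hsum : x + 3 / (2:ℝ)^(k+1) = (x * M + 3) / M := by
    rw [← hcastM]; field_simp
  have hup : ∀ c : ℝ, c ≤ 2 → ((j:ℝ) + c) / M ≤ x + 3 / (2:ℝ)^(k+1) := by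
    intro c hc
    rw [hsum]
    have hnum : (j:ℝ) + c ≤ x * M + 3 := by linarith
    gcongr
  -- case analysis on whether I_j or I_{j+1} is hit
  rcases lt_or_ge (posf (rr k j)) N with hp1 | hp1
  · exact hit j (by omega) hp1 hxj (by
      have := hup 1 (by norm_num); simpa using this)
  rcases lt_or_ge (posf (rr k (j+1))) N with hp2 | hp2
  · refine hit (j+1) (by omega) hp2 (by push_cast; exact hxj1) ?_
    have := hup 2 (by norm_num)
    push_cast
    have e : ((j:ℝ) + 1 + 1) = (j:ℝ) + 2 := by ring
    rw [e]
    exact this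
  -- both intervals missed
  set p1 := posf (rr k j) with hp1def
  set p2 := posf (rr k (j+1)) with hp2def
  have hp1M : p1 < M := hpos_lt _
  have hp2M : p2 < M := hpos_lt _
  by_cases hjpar : j % 2 = 0
  · -- j even: contradiction
    exfalso
    have hfact : j + 1 = 2 ^ 0 * (j + 1) := by ring
    have hlow : ∀ i, 1 ≤ i → i ≤ k → g k i (j+1) = g k i j := by
      intro i h1 h2
      exact g_eq_of k i j 0 (j+1) (by omega) hfact (Or.inl (by omega))
    have htop : g k (k+1) (j+1) ≠ g k (k+1) j :=
      g_ne_of k (k+1) j 0 (j+1) (by omega) hfact (by omega) (by omega)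
    have hrel := rr_step k j (j+1) hlow htop
    rw [← hKdef] at hrel
    have := hstep' (rr k j) (rr k (j+1)) (by tauto) hp1
    rw [← hp2def, ← hp1def] at this
    omega
  · have hjodd : j % 2 = 1 := by omega
    obtain ⟨s, o, hod, hfact⟩ := Nat.exists_eq_pow_mul_and_not_dvd
      (n := j+1) (by omega) 2 (by norm_num)
    have ho2 : o % 2 = 1 := by omega
    by_cases hs : s % 2 = 0
    · -- s even: contradiction through the distance estimate
      exfalso
      set E := ∑ i ∈ (Finset.Icc 1 k).filter (fun i => i % 2 ≠ k % 2), 2 ^ (i - 1) with hEdef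
      have hE := E_val k
      rw [← hEdef, ← hKdef] at hE
      have hKE : K + E = N := by
        have := two_pow_mod_three k
        rw [← hKdef] at this
        omega
      have hElt : E < K := by
        have := two_pow_mod_three k
        rw [← hKdef] at this
        omega
      have hmid : ∀ i ∈ (Finset.Icc 1 k), i % 2 = k % 2 → g k i (j+1) = g k i j := by
        intro i hi hpar
        rw [Finset.mem_Icc] at hi
        apply g_eq_of k i j s o ho2 hfact
        by_cases hts : s < k + 1 - i
        · exact Or.inl hts
        · exact Or.inr ⟨by omega, by omega⟩
      have htop : g k (k+1) (j+1) ≠ g k (k+1) j :=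
        g_ne_of k (k+1) j s o ho2 hfact (by omega) (by omega)
      -- integer difference of the two residues
      set S1 : ℤ := ∑ i ∈ Finset.Icc 1 k, ((g k i (j+1) : ℤ) - g k i j) * 2 ^ (i-1) with hS1def
      have hrr1 : ((rr k (j+1) : ℤ)) - rr k j
          = ((g k (k+1) (j+1) : ℤ) - g k (k+1) j) * 2 ^ k + S1 := by
        rw [hS1def]
        unfold rr
        push_cast
        rw [← Finset.sum_sub_distrib]
        rw [Finset.sum_Icc_succ_top (by omega : 1 ≤ k + 1)]
        have e : ∀ i ∈ Finset.Icc 1 k,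
            ((g k i (j+1) : ℤ) * 2 ^ (i-1) - (g k i j : ℤ) * 2 ^ (i-1))
            = ((g k i (j+1) : ℤ) - g k i j) * 2 ^ (i-1) := by
          intro i _; ring
        rw [Finset.sum_congr rfl e]
        have e2 : (k + 1 - 1) = k := by omega
        rw [e2]
        ring
      have habs : |S1| ≤ (E:ℤ) := by
        calc |S1| ≤ ∑ i ∈ Finset.Icc 1 k, |((g k i (j+1) : ℤ) - g k i j) * 2 ^ (i-1)| :=
              Finset.abs_sum_le_sum_abs _ _
          _ = ∑ i ∈ (Finset.Icc 1 k).filter (fun i => i % 2 ≠ k % 2),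
                |((g k i (j+1) : ℤ) - g k i j) * 2 ^ (i-1)| := by
              symm
              apply Finset.sum_subset (Finset.filter_subset _ _)
              intro i hi hni
              rw [Finset.mem_filter] at hni
              have hpar : i % 2 = k % 2 := by
                by_contra hc
                exact hni ⟨hi, hc⟩
              rw [hmid i hi hpar]
              simp
          _ ≤ ∑ i ∈ (Finset.Icc 1 k).filter (fun i => i % 2 ≠ k % 2), ((2:ℤ) ^ (i-1)) := by
              apply Finset.sum_le_sum
              intro i _
              rw [abs_mul]
              have h1 : |((g k i (j+1) : ℤ) - g k i j)| ≤ 1 := by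
                have := g_le_one k i (j+1)
                have := g_le_one k i j
                rw [abs_le]
                constructor <;> push_cast <;> omega
              have h2 : |(2:ℤ) ^ (i-1)| = 2 ^ (i-1) := by
                rw [abs_pow]; norm_num
              rw [h2]
              exact mul_le_of_le_one_left (by positivity) h1
          _ = (E:ℤ) := by rw [hEdef]; push_cast; rfl
      have htopval : ((g k (k+1) (j+1) : ℤ) - g k (k+1) j) = 1
          ∨ ((g k (k+1) (j+1) : ℤ) - g k (k+1) j) = -1 := by
        have h1 := g_le_one k (k+1) (j+1)
        have h2 := g_le_one k (k+1) j
        have h3 : (g k (k+1) (j+1) : ℤ) ≠ (g k (k+1) j : ℤ) := by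
          exact_mod_cast fun h => htop (by exact_mod_cast h)
        push_cast
        omega
      have habs1 := abs_le.mp habs
      -- congruences
      have hc1 : (a + p1) % M = rr k j := hpos_mod _ (rr_lt k j)
      have hc2 : (a + p2) % M = rr k (j+1) := hpos_mod _ (rr_lt k (j+1))
      have hz1 : M * ((a + p1) / M) + rr k j = a + p1 := by
        conv_rhs => rw [← Nat.div_add_mod (a + p1) M]
        rw [hc1]
      have hz2 : M * ((a + p2) / M) + rr k (j+1) = a + p2 := by
        conv_rhs => rw [← Nat.div_add_mod (a + p2) M]
        rw [hc2]
      set q1 := (a + p1) / M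
      set q2 := (a + p2) / M
      have hz1' : (M:ℤ) * q1 + rr k j = a + p1 := by exact_mod_cast hz1
      have hz2' : (M:ℤ) * q2 + rr k (j+1) = a + p2 := by exact_mod_cast hz2
      set Δ : ℤ := (rr k (j+1) : ℤ) - rr k j with hΔdef
      have hzz : ((p2:ℤ) - p1) - Δ = M * ((q2:ℤ) - q1) := by
        rw [hΔdef]
        push_cast at hz1' hz2' ⊢
        linear_combination hz1' - hz2'
      have hKZ : ((2:ℤ)) ^ k = (K : ℤ) := by rw [hKdef]; push_cast; ring
      have hΔub : Δ ≤ (K:ℤ) + E := by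
        rcases htopval with h | h <;> rw [hrr1, h, hKZ] <;> linarith
      have hΔlb' : (K:ℤ) - E ≤ |Δ| := by
        rcases htopval with h | h
        · have : Δ = (K:ℤ) + S1 := by rw [hrr1, h, hKZ]; ring
          have hpos' : 0 ≤ Δ := by
            rw [this]
            have : (E:ℤ) < K := by exact_mod_cast hElt
            linarith
          rw [abs_of_nonneg hpos', this]
          linarith
        · have : Δ = -(K:ℤ) + S1 := by rw [hrr1, h, hKZ]; ring
          have hneg' : Δ ≤ 0 := by
            rw [this]
            have : (E:ℤ) < K := by exact_mod_cast hElt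
            linarith
          rw [abs_of_nonpos hneg', this]
          linarith
      have hNK : (K:ℤ) + E = N := by exact_mod_cast hKE
      have hΔub' : |Δ| ≤ (N:ℤ) := by
        rw [abs_le]
        rcases htopval with h | h
        · have hΔ : Δ = (K:ℤ) + S1 := by rw [hrr1, h, hKZ]; ring
          constructor <;> linarith [habs1.1, habs1.2]
        · have hΔ : Δ = -(K:ℤ) + S1 := by rw [hrr1, h, hKZ]; ring
          constructor <;> linarith [habs1.1, habs1.2]
      -- |p2 - p1| small
      have hpd : |(p2:ℤ) - p1| ≤ (M:ℤ) - 1 - N := by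
        rw [abs_le]
        constructor <;> push_cast <;> omega
      have hq0 : (q2:ℤ) - q1 = 0 := by
        by_contra hne
        have h1 : 1 ≤ |(q2:ℤ) - q1| := Int.one_le_abs (by omega)
        have h2 : (M:ℤ) ≤ |(M:ℤ) * ((q2:ℤ) - q1)| := by
          rw [abs_mul, abs_of_nonneg (by positivity : (0:ℤ) ≤ (M:ℤ))]
          exact le_mul_of_one_le_right (by positivity) h1
        rw [← hzz] at h2
        have h3 : |((p2:ℤ) - p1) - Δ| ≤ |(p2:ℤ) - p1| + |Δ| := abs_sub _ _
        have hMN : (N:ℤ) < M := by exact_mod_cast hNM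
        linarith
      have hΔeq : Δ = (p2:ℤ) - p1 := by
        have h' := hzz
        rw [hq0, mul_zero] at h'
        linarith
      have hM2K' : (M:ℤ) = 2 * K := by exact_mod_cast hM2K
      rw [hΔeq] at hΔlb'
      linarith
    · -- s odd: construct the bracketing pair
      have hsodd : s % 2 = 1 := by omega
      obtain ⟨jm, hjm⟩ : ∃ jm, j = jm + 1 := ⟨j - 1, by omega⟩
      have hmfact : jm + 1 = 2 ^ 0 * (jm + 1) := by ring
      have hmlow : ∀ i, 1 ≤ i → i ≤ k → g k i j = g k i jm := by
        intro i h1 h2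
        have h := g_eq_of k i jm 0 (jm+1) (by omega) hmfact (Or.inl (by omega))
        rwa [← hjm] at h
      have hmtop : g k (k+1) j ≠ g k (k+1) jm := by
        have h := g_ne_of k (k+1) jm 0 (jm+1) (by omega) hmfact (by omega) (by omega)
        rwa [← hjm] at h
      have hpfact : (j+1) + 1 = 2 ^ 0 * (j+2) := by ring
      have hplow : ∀ i, 1 ≤ i → i ≤ k → g k i (j+2) = g k i (j+1) := by
        intro i h1 h2
        have h := g_eq_of k i (j+1) 0 (j+2) (by omega) hpfact (Or.inl (by omega))
        have e : (j+1)+1 = j+2 := by omega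
        rwa [e] at h
      have hptop : g k (k+1) (j+2) ≠ g k (k+1) (j+1) := by
        have h := g_ne_of k (k+1) (j+1) 0 (j+2) (by omega) hpfact (by omega) (by omega)
        have e : (j+1)+1 = j+2 := by omega
        rwa [e] at h
      have hmidtop : g k (k+1) (j+1) = g k (k+1) j :=
        g_eq_of k (k+1) j s o ho2 hfact (Or.inr ⟨by omega, by omega⟩)
      have hrelm := rr_step k jm j hmlow hmtop
      rw [← hKdef] at hrelm
      have hσm : posf (rr k jm) = p1 + K - M :=
        hstep' (rr k j) (rr k jm) (by tauto) hp1
      have hrelp := rr_step k (j+1) (j+2) hplow hptop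
      rw [← hKdef] at hrelp
      have hσp : posf (rr k (j+2)) = p2 + K - M :=
        hstep' (rr k (j+1)) (rr k (j+2)) (by tauto) hp2
      set nm := a + posf (rr k jm) with hnmdef
      set np := a + posf (rr k (j+2)) with hnpdef
      have hnmmod : nm % M = rr k jm := hpos_mod _ (rr_lt k jm)
      have hnpmod : np % M = rr k (j+2) := hpos_mod _ (rr_lt k (j+2))
      have htopeq : g k (k+1) jm = g k (k+1) (j+2) := by
        have h1 := g_le_one k (k+1) jm
        have h2 := g_le_one k (k+1) (j+2)
        have h3 := g_le_one k (k+1) j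
        have h4 := g_le_one k (k+1) (j+1)
        omega
      have hrtop : rr k jm / K = rr k (j+2) / K := by
        rw [hKdef, rr_top, rr_top]; exact htopeq
      have hM2K'' : K * 2 = M := by omega
      have hq1 : nm / K % 2 = rr k jm / K := by
        have h := Nat.mod_mul_right_div_self nm K 2
        rw [hM2K'', hnmmod] at h
        omega
      have hq2 : np / K % 2 = rr k (j+2) / K := by
        have h := Nat.mod_mul_right_div_self np K 2
        rw [hM2K'', hnpmod] at h
        omega
      have hqpar : nm / K % 2 = np / K % 2 := by rw [hq1, hq2, hrtop]
      have hd1 : nm = a + (p1 + K - M) := by rw [hnmdef, hσm]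
      have hd2 : np = a + (p2 + K - M) := by rw [hnpdef, hσp]
      have hclose : nm / K = np / K := by
        rcases le_total np nm with h | h
        · exact div_close K nm np hKpos hqpar h (by omega)
        · exact (div_close K np nm hKpos hqpar.symm h (by omega)).symm
      have htl : tailR m k nm = tailR m k np := by
        apply tail_congr
        rw [← hKdef]
        exact hclose
      have hψm := psi_decomp m k nm hkm
      have hψp := psi_decomp m k np hkm
      rw [← hMdef] at hψm hψp
      rw [hnmmod] at hψm
      rw [hnpmod] at hψp
      have hjmM : jm < 2 ^ (k+1) := by rw [← hMdef]; omega
      have hjpM : j + 2 < 2 ^ (k+1) := by rw [← hMdef]; omega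
      rw [dsum_rr k jm hjmM] at hψm
      rw [dsum_rr k (j+2) hjpM] at hψp
      rw [← htl] at hψp
      set T := tailR m k nm with hTdef
      have hT0 : 0 ≤ T := tail_nonneg m k nm
      have hT1 : T < 1 / 2 ^ (k+1) := tail_lt m k nm hkm
      have hRpos : (0:ℝ) < (2:ℝ)^(k+1) := by positivity
      have hj1' : x * (2:ℝ)^(k+1) ≤ (j:ℝ) := by rwa [hcastM] at hj1
      have hj2' : (j:ℝ) < x * (2:ℝ)^(k+1) + 1 := by rwa [hcastM] at hj2
      by_cases hcase : x ≤ psiMap m nm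
      · refine ⟨nm, ⟨by omega, by omega⟩, hcase, ?_⟩
        rw [hψm]
        have h1 : ((jm:ℝ)) / 2^(k+1) + T < ((jm:ℝ) + 1) / 2^(k+1) := by
          rw [add_div]; linarith
        have h2 : ((jm:ℝ) + 1) = (j:ℝ) := by rw [hjm]; push_cast; ring
        have h3 : (j:ℝ) / 2^(k+1) < x + 1 / 2^(k+1) := by
          rw [div_lt_iff₀ hRpos]
          have he : (x + 1/(2:ℝ)^(k+1)) * (2:ℝ)^(k+1) = x * 2^(k+1) + 1 := by
            field_simp
          rw [he]; exact hj2'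
        have h4 : x + 1/(2:ℝ)^(k+1) ≤ x + 3/(2:ℝ)^(k+1) := by gcongr <;> norm_num
        rw [h2] at h1
        linarith
      · push_neg at hcase
        refine ⟨np, ⟨by omega, by omega⟩, ?_, ?_⟩
        · rw [hψp]
          have h5 : x ≤ ((j:ℝ)+2) / 2^(k+1) := by
            rw [le_div_iff₀ hRpos]
            linarith
          have he : ((j+2:ℕ):ℝ) = (j:ℝ) + 2 := by push_cast; ring
          rw [he]
          linarith
        · rw [hψp]
          have he : ((j+2:ℕ):ℝ) = (jm:ℝ) + 3 := by rw [hjm]; push_cast; ring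
          have he2 : ((jm:ℝ) + 3)/(2:ℝ)^(k+1) = (jm:ℝ)/2^(k+1) + 3/2^(k+1) := by
            rw [add_div]
          rw [he, he2]
          have hlt : (jm:ℝ)/2^(k+1) + T < x := by rw [← hψm]; exact hcase
          linarith

end PsiGap

/-- For a set `B` of `⌊(4/3)·2^k⌋` consecutive integers in `{1,…,2^m−1}` with
`k ∈ {1,…,m−1}`, every gap of `ψ(B) ∪ {0,1}` is at most `3/2^{k+1}`. -/
theorem psi_gap_B (m k a : ℕ) (hm : 2 ≤ m) (hk1 : 1 ≤ k) (hkm : k ≤ m - 1)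
    (ha1 : 1 ≤ a) (ha2 : a + 2 ^ (k + 2) / 3 ≤ 2 ^ m) (S : Set ℝ)
    (hS : S = {0, 1} ∪ (fun n => psiMap m n) '' {n : ℕ | a ≤ n ∧ n < a + 2 ^ (k + 2) / 3}) :
    ∀ t₁ ∈ S, ∀ t₂ ∈ S, t₁ < t₂ → (∀ t ∈ S, ¬(t₁ < t ∧ t < t₂)) →
      t₂ - t₁ ≤ 3 / (2 : ℝ) ^ (k + 1) := by
  intro t₁ ht₁ t₂ ht₂ hlt hno
  by_contra hcon
  push_neg at hcon
  have hkm' : k + 1 ≤ m := by omega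
  have hbounds : ∀ t ∈ S, 0 ≤ t ∧ t ≤ 1 := by
    intro t ht
    rw [hS] at ht
    rcases ht with h | h
    · have : t = 0 ∨ t = 1 := by simpa using h
      rcases this with rfl | rfl <;> norm_num
    · obtain ⟨n, _, rfl⟩ := h
      exact ⟨PsiGap.psi_nonneg m n, PsiGap.psi_le_one m n⟩
  have ht1b := hbounds t₁ ht₁
  have ht2b := hbounds t₂ ht₂
  have hgap : 3 / (2:ℝ)^(k+1) < t₂ - t₁ := hcon
  set x := t₁ + (t₂ - t₁ - 3 / (2:ℝ)^(k+1)) / 2 with hxdef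
  have hx0 : 0 ≤ x := by
    have := ht1b.1
    rw [hxdef]
    linarith
  have hxgt : t₁ < x := by rw [hxdef]; linarith
  have hxL : x + 3 / (2:ℝ)^(k+1) < t₂ := by rw [hxdef]; linarith
  have hx1 : x + 3 / (2:ℝ)^(k+1) ≤ 1 := le_trans (le_of_lt hxL) ht2b.2
  obtain ⟨n, hn, hψ1, hψ2⟩ := PsiGap.main m k a hk1 hkm' x hx0 hx1
  have hmem : psiMap m n ∈ S := by
    rw [hS]; right; exact ⟨n, hn, rfl⟩
  exact hno _ hmem ⟨lt_of_lt_of_le hxgt hψ1, lt_of_le_of_lt hψ2 hxL⟩
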